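/- Let S_1 = Z⟨x, y | yx = 1⟩ and F = span of the elements E_{ij} = x^i y^j - x^{i+1} y^{j+1} for i, j ∈ ℕ. Then the right ideal (x-1)S_1 is not a two-sided ideal of S_1; in particular, there is no element a ∈ S_1 with (x-1)a = E_{00}. -/
import Mathlib

/-- Defining relation `y * x = 1` for the algebra of one-sided inverses `S₁(R)`. -/
inductive S1Rel (R : Type) [CommRing R] : FreeAlgebra R Bool → FreeAlgebra R Bool → Prop
  | rel : S1Rel R (FreeAlgebra.ι R false * FreeAlgebra.ι R true) 1

/-- `S₁(R) = R⟨x, y | yx = 1⟩`, the algebra of one-sided inverses of `R[x]`. -/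
abbrev S1 (R : Type) [CommRing R] := RingQuot (S1Rel R)

/-- The generator `x` of `S₁(R)`. -/
noncomputable def S1.x (R : Type) [CommRing R] : S1 R :=
  RingQuot.mkRingHom (S1Rel R) (FreeAlgebra.ι R true)

/-- The generator `y` of `S₁(R)`. -/
noncomputable def S1.y (R : Type) [CommRing R] : S1 R :=
  RingQuot.mkRingHom (S1Rel R) (FreeAlgebra.ι R false)

/-- The right shift on finitely supported integer sequences. -/
noncomputable def Sop : Module.End ℤ (ℕ →₀ ℤ) := Finsupp.lmapDomain ℤ ℤ Nat.succ

/-- The left shift on finitely supported integer sequences. -/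
noncomputable def Tp : Module.End ℤ (ℕ →₀ ℤ) :=
  Finsupp.lcomapDomain Nat.succ Nat.succ_injective

lemma Sop_apply (f : ℕ →₀ ℤ) (n : ℕ) : Sop f (n + 1) = f n := by
  simpa [Sop] using Finsupp.mapDomain_apply Nat.succ_injective f n

lemma Sop_apply_zero (f : ℕ →₀ ℤ) : Sop f 0 = 0 := by
  refine Finsupp.mapDomain_notin_range f 0 ?_
  rintro ⟨n, hn⟩
  exact Nat.succ_ne_zero n hn

lemma Top_apply (f : ℕ →₀ ℤ) (n : ℕ) : Tp f n = f (n + 1) := rfl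

lemma Top_Sop : Tp * Sop = 1 := by
  ext f n
  simp [Module.End.mul_apply, Top_apply, Sop_apply]

/-- The representation of `S₁(ℤ)` on finitely supported sequences. -/
noncomputable def rep : S1 ℤ →ₐ[ℤ] Module.End ℤ (ℕ →₀ ℤ) :=
  RingQuot.liftAlgHom ℤ ⟨FreeAlgebra.lift ℤ (fun b => if b then Sop else Tp), by
    intro u v h
    cases h
    simp [Top_Sop]⟩

lemma rep_x : rep (S1.x ℤ) = Sop := by
  have : S1.x ℤ = RingQuot.mkAlgHom ℤ (S1Rel ℤ) (FreeAlgebra.ι ℤ true) := by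
    rw [S1.x, ← RingQuot.mkAlgHom_coe ℤ (S1Rel ℤ)]; rfl
  rw [this, rep, RingQuot.liftAlgHom_mkAlgHom_apply]
  simp

lemma rep_y : rep (S1.y ℤ) = Tp := by
  have : S1.y ℤ = RingQuot.mkAlgHom ℤ (S1Rel ℤ) (FreeAlgebra.ι ℤ false) := by
    rw [S1.y, ← RingQuot.mkAlgHom_coe ℤ (S1Rel ℤ)]; rfl
  rw [this, rep, RingQuot.liftAlgHom_mkAlgHom_apply]
  simp

/-- `δ₀` is not in the range of `Sop - 1`. -/
lemma key (f : ℕ →₀ ℤ) : Sop f - f ≠ Finsupp.single 0 1 := by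
  intro h
  have hall : ∀ n, f n = -1 := by
    intro n
    induction n with
    | zero =>
      have := congrArg (fun g : ℕ →₀ ℤ => g 0) h
      simp [Sop_apply_zero] at this
      omega
    | succ n ih =>
      have := congrArg (fun g : ℕ →₀ ℤ => g (n + 1)) h
      simp [Sop_apply, Finsupp.single_apply] at this
      omega
  obtain ⟨n, hn⟩ := f.support.exists_notMem
  have : f n = 0 := Finsupp.notMem_support_iff.mp hn
  rw [hall n] at this
  omega

/-- In `S₁(ℤ)`, the right ideal `(x-1)S₁` is not a two-sided ideal; in particular there is
no element `a ∈ S₁` with `(x-1)a = E₀₀ = 1 - xy`. -/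
theorem S1.x_sub_one_not_right_normal :
    (¬ ∀ a b : S1 ℤ, ∃ c : S1 ℤ, a * ((S1.x ℤ - 1) * b) = (S1.x ℤ - 1) * c) ∧
    ¬ ∃ a : S1 ℤ, (S1.x ℤ - 1) * a = 1 - S1.x ℤ * S1.y ℤ := by
  have δ0 : ℕ →₀ ℤ := Finsupp.single 0 1
  constructor
  · intro h
    obtain ⟨c, hc⟩ := h (S1.y ℤ) 1
    have := congrArg rep hc
    simp only [map_mul, map_sub, map_one, rep_x, rep_y, mul_one] at this
    have h2 := congrArg (fun e : Module.End ℤ (ℕ →₀ ℤ) => e (Finsupp.single 0 1)) this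
    simp only [Module.End.mul_apply, LinearMap.sub_apply, Module.End.one_apply, map_sub] at h2
    have hTS : Tp (Sop (Finsupp.single 0 1)) = Finsupp.single 0 1 := by
      have := congrArg (fun e : Module.End ℤ (ℕ →₀ ℤ) => e (Finsupp.single 0 1)) Top_Sop
      simpa [Module.End.mul_apply] using this
    have hT : Tp (Finsupp.single 0 1) = 0 := by
      ext n
      simp [Top_apply, Finsupp.single_apply]
    rw [hTS, hT, sub_zero] at h2
    exact key _ h2.symm
  · rintro ⟨a, ha⟩
    have := congrArg rep ha
    simp only [map_mul, map_sub, map_one, rep_x, rep_y] at this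
    have h2 := congrArg (fun e : Module.End ℤ (ℕ →₀ ℤ) => e (Finsupp.single 0 1)) this
    simp only [Module.End.mul_apply, LinearMap.sub_apply, Module.End.one_apply] at h2
    have hT : Tp (Finsupp.single 0 1) = 0 := by
      ext n
      simp [Top_apply, Finsupp.single_apply]
    rw [hT] at h2
    simp only [map_zero, sub_zero] at h2
    exact key _ h2
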